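/- Consider the n-qubit network Lindblad equation with diffusive coupling on a connected weighted graph. Then for every η > 0 and every T₁ > 0 there exists K* > 0 such that for every K ≥ K* and every K-solution ρ of the network Lindblad equation, one has ‖ρ(t) − P*(ρ(t))‖_F ≤ η for all t ≥ T₁. -/

import Mathlib

/-! Statement 8: for sufficiently strong diffusive coupling, the state of the
n-qubit network Lindblad equation stays η-close to its permutation-invariant
projection after any positive time T₁. -/

open Finset Matrix
open scoped ComplexOrder

attribute [local instance] Matrix.frobeniusSeminormedAddCommGroup
  Matrix.frobeniusNormedAddCommGroup Matrix.frobeniusNormedSpace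

noncomputable section

/-- Matrices on the `n`-qubit Hilbert space, indexed by functions `Fin n → Fin 2`,
equipped with the Frobenius norm. -/
abbrev QMat (n : ℕ) : Type := Matrix (Fin n → Fin 2) (Fin n → Fin 2) ℂ

/-- The Lindblad dissipator `D(L)ρ = LρL† - (1/2)(L†Lρ + ρL†L)`. -/
def dissip {n : ℕ} (L X : QMat n) : QMat n :=
  L * X * Lᴴ - (1 / 2 : ℂ) • (Lᴴ * L * X + X * (Lᴴ * L))

/-- The drift superoperator `𝒜ρ = -(i/ℏ)[H,ρ] + Σ_l γ_l D(L_l)ρ`. -/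
def drift {n : ℕ} {ι : Type} [Fintype ι] (hbar : ℝ) (H : QMat n) (γ : ι → ℝ)
    (L : ι → QMat n) (X : QMat n) : QMat n :=
  (-(Complex.I / (hbar : ℂ))) • (H * X - X * H) + ∑ l, (γ l : ℂ) • dissip (L l) X

/-- The swap conjugation `Θ_{jk}ρ = U_{jk} ρ U_{jk}†`. -/
def swapConj {n : ℕ} (j k : Fin n) (X : QMat n) : QMat n :=
  Matrix.of fun f g => X (f ∘ Equiv.swap j k) (g ∘ Equiv.swap j k)

/-- The diffusive coupling term `Σ_{j<k} a_{jk} (Θ_{jk}ρ - ρ)`. -/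
def coupling {n : ℕ} (a : Fin n → Fin n → ℝ) (X : QMat n) : QMat n :=
  ∑ j, ∑ k, if j < k then a j k • (swapConj j k X - X) else 0

/-- The permutation-invariant projection `(P*ρ)(f,g) = (1/n!) Σ_π ρ(f∘π, g∘π)`. -/
def permProj {n : ℕ} (X : QMat n) : QMat n :=
  Matrix.of fun f g => (n.factorial : ℂ)⁻¹ * ∑ π : Equiv.Perm (Fin n), X (f ∘ π) (g ∘ π)

variable {n : ℕ}

/-- real Frobenius inner product -/
def Fip (x y : QMat n) : ℝ := ∑ f, ∑ g, ((starRingEnd ℂ) (x f g) * y f g).re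

lemma Fip_self (x : QMat n) : Fip x x = ‖x‖ ^ 2 := by
  have h : ‖x‖ = (∑ f, ∑ g, ‖x f g‖ ^ (2:ℝ)) ^ (1/2 : ℝ) := Matrix.frobenius_norm_def x
  have hnn : (0:ℝ) ≤ ∑ f, ∑ g, ‖x f g‖ ^ (2:ℝ) := by positivity
  have h2 : ‖x‖ ^ 2 = ∑ f, ∑ g, ‖x f g‖ ^ (2:ℝ) := by
    rw [h, ← Real.rpow_natCast (_ ^ (1/2:ℝ)) 2, ← Real.rpow_mul hnn]
    norm_num
  rw [h2, Fip]
  refine Finset.sum_congr rfl fun f _ => Finset.sum_congr rfl fun g _ => ?_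
  rw [← Complex.normSq_eq_conj_mul_self, Complex.normSq_eq_norm_sq,
    show (2:ℝ) = ((2:ℕ):ℝ) by norm_num, Real.rpow_natCast]
  simp [← Complex.ofReal_pow]

lemma Fip_comm (x y : QMat n) : Fip x y = Fip y x := by
  unfold Fip
  refine Finset.sum_congr rfl fun f _ => Finset.sum_congr rfl fun g _ => ?_
  rw [← Complex.conj_re ((starRingEnd ℂ) (y f g) * x f g)]
  simp [mul_comm]

lemma Fip_add_right (x y z : QMat n) : Fip x (y + z) = Fip x y + Fip x z := by
  simp [Fip, Matrix.add_apply, mul_add, ← Finset.sum_add_distrib]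

lemma Fip_sub_right (x y z : QMat n) : Fip x (y - z) = Fip x y - Fip x z := by
  simp [Fip, Matrix.sub_apply, mul_sub, ← Finset.sum_sub_distrib]

lemma Fip_smul_right (r : ℝ) (x y : QMat n) : Fip x (r • y) = r * Fip x y := by
  simp only [Fip, Matrix.smul_apply, Finset.mul_sum]
  refine Finset.sum_congr rfl fun f _ => Finset.sum_congr rfl fun g _ => ?_
  simp [Complex.real_smul, Complex.mul_re, Complex.conj_re, Complex.conj_im]
  ring

lemma Fip_zero_right (x : QMat n) : Fip x 0 = 0 := by simp [Fip]

lemma Fip_sum_right {κ : Type} [Fintype κ] (x : QMat n) (y : κ → QMat n) :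
    Fip x (∑ i, y i) = ∑ i, Fip x (y i) := by
  classical
  induction (Finset.univ : Finset κ) using Finset.induction with
  | empty => simp [Fip_zero_right]
  | @insert _ _ h ih => rw [Finset.sum_insert h, Fip_add_right, ih, Finset.sum_insert h]

lemma norm_sub_sq_Fip (x y : QMat n) :
    ‖x - y‖ ^ 2 = ‖x‖ ^ 2 + ‖y‖ ^ 2 - 2 * Fip x y := by
  have h : Fip (x - y) (x - y) = Fip x x - Fip x y - (Fip y x - Fip y y) := by
    rw [show Fip (x-y) (x-y) = Fip (x-y) x - Fip (x-y) y from Fip_sub_right _ x y,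
      Fip_comm (x-y) x, Fip_comm (x-y) y, Fip_sub_right, Fip_sub_right]
  rw [← Fip_self, h, ← Fip_self, ← Fip_self, Fip_comm y x]
  ring

/-- Cauchy–Schwarz for `Fip`. -/
lemma Fip_le_norm (x y : QMat n) : Fip x y ≤ ‖x‖ * ‖y‖ := by
  have h1 : Fip x y ≤ ∑ f, ∑ g, ‖x f g‖ * ‖y f g‖ := by
    refine Finset.sum_le_sum fun f _ => Finset.sum_le_sum fun g _ => ?_
    calc ((starRingEnd ℂ) (x f g) * y f g).re ≤ ‖(starRingEnd ℂ) (x f g) * y f g‖ :=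
          Complex.re_le_norm _
      _ = ‖x f g‖ * ‖y f g‖ := by simp
  have h2 : (∑ f, ∑ g, ‖x f g‖ * ‖y f g‖) ^ 2
      ≤ (∑ f, ∑ g, ‖x f g‖ ^ 2) * (∑ f, ∑ g, ‖y f g‖ ^ 2) := by
    have := Finset.sum_mul_sq_le_sq_mul_sq (Finset.univ : Finset ((Fin n → Fin 2) × (Fin n → Fin 2)))
      (fun p => ‖x p.1 p.2‖) (fun p => ‖y p.1 p.2‖)
    simpa [← Finset.sum_product', Finset.sum_product] using this
  have hx : (∑ f, ∑ g, ‖x f g‖ ^ 2) = ‖x‖^2 := by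
    rw [← Fip_self]
    refine Finset.sum_congr rfl fun f _ => Finset.sum_congr rfl fun g _ => ?_
    rw [← Complex.normSq_eq_conj_mul_self]
    simp [Complex.normSq_eq_norm_sq, ← Complex.ofReal_pow]
  have hy : (∑ f, ∑ g, ‖y f g‖ ^ 2) = ‖y‖^2 := by
    rw [← Fip_self]
    refine Finset.sum_congr rfl fun f _ => Finset.sum_congr rfl fun g _ => ?_
    rw [← Complex.normSq_eq_conj_mul_self]
    simp [Complex.normSq_eq_norm_sq, ← Complex.ofReal_pow]
  rw [hx, hy] at h2
  have h3 : (∑ f, ∑ g, ‖x f g‖ * ‖y f g‖) ≤ ‖x‖ * ‖y‖ := by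
    have hnn : (0:ℝ) ≤ ∑ f, ∑ g, ‖x f g‖ * ‖y f g‖ := by positivity
    nlinarith [norm_nonneg x, norm_nonneg y, mul_nonneg (norm_nonneg x) (norm_nonneg y)]
  linarith

/-- conjugation by a permutation -/
def permConj (π : Equiv.Perm (Fin n)) (X : QMat n) : QMat n :=
  Matrix.of fun f g => X (f ∘ π) (g ∘ π)

@[simp] lemma permConj_apply (π : Equiv.Perm (Fin n)) (X : QMat n) (f g) :
    permConj π X f g = X (f ∘ π) (g ∘ π) := rfl

lemma swapConj_eq_permConj (j k : Fin n) (X : QMat n) :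
    swapConj j k X = permConj (Equiv.swap j k) X := rfl

lemma sum_precomp {M : Type*} [AddCommMonoid M] (π : Equiv.Perm (Fin n))
    (h : (Fin n → Fin 2) → M) : ∑ f, h (f ∘ π) = ∑ f, h f :=
  Fintype.sum_equiv (Equiv.arrowCongr π.symm (Equiv.refl (Fin 2))) _ _ (fun f => rfl)

lemma sum2_precomp {M : Type*} [AddCommMonoid M] (π : Equiv.Perm (Fin n))
    (h : (Fin n → Fin 2) → (Fin n → Fin 2) → M) :
    ∑ f, ∑ g, h (f ∘ π) (g ∘ π) = ∑ f, ∑ g, h f g := by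
  calc ∑ f, ∑ g, h (f ∘ ⇑π) (g ∘ ⇑π) = ∑ f, ∑ g, h (f ∘ ⇑π) g :=
        Finset.sum_congr rfl fun f _ => sum_precomp π (h (f ∘ ⇑π))
    _ = ∑ f, ∑ g, h f g := sum_precomp π (fun f' => ∑ g, h f' g)

lemma Fip_permConj (π : Equiv.Perm (Fin n)) (x y : QMat n) :
    Fip (permConj π x) (permConj π y) = Fip x y := by
  simpa [Fip] using sum2_precomp π (fun f g => ((starRingEnd ℂ) (x f g) * y f g).re)

lemma permConj_mul (σ π : Equiv.Perm (Fin n)) (X : QMat n) :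
    permConj (σ * π) X = permConj σ (permConj π X) := rfl

lemma permConj_one (X : QMat n) : permConj 1 X = X := rfl

lemma norm_permConj (π : Equiv.Perm (Fin n)) (X : QMat n) :
    ‖permConj π X‖ = ‖X‖ := by
  have h : ‖permConj π X‖ ^ 2 = ‖X‖ ^ 2 := by
    rw [← Fip_self, ← Fip_self, Fip_permConj]
  have := congrArg Real.sqrt h
  simpa [Real.sqrt_sq, norm_nonneg] using this

lemma permProj_eq_avg (X : QMat n) :
    permProj X = ((n.factorial : ℝ)⁻¹) • ∑ π : Equiv.Perm (Fin n), permConj π X := by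
  ext f g
  show (n.factorial : ℂ)⁻¹ * ∑ π : Equiv.Perm (Fin n), X (f ∘ π) (g ∘ π) = _
  simp [Matrix.smul_apply, Complex.real_smul, Matrix.sum_apply]

lemma permProj_permConj (π : Equiv.Perm (Fin n)) (X : QMat n) :
    permProj (permConj π X) = permProj X := by
  ext f g
  show (n.factorial : ℂ)⁻¹ * _ = (n.factorial : ℂ)⁻¹ * _
  congr 1
  exact Fintype.sum_equiv (Equiv.mulRight π) _ _ (fun σ => rfl)

lemma permConj_permProj (π : Equiv.Perm (Fin n)) (X : QMat n) :
    permConj π (permProj X) = permProj X := by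
  ext f g
  show (n.factorial : ℂ)⁻¹ * _ = (n.factorial : ℂ)⁻¹ * _
  congr 1
  exact Fintype.sum_equiv (Equiv.mulLeft π) _ _ (fun σ => rfl)

lemma permProj_apply_comp (π : Equiv.Perm (Fin n)) (X : QMat n) (f g) :
    permProj X (f ∘ π) (g ∘ π) = permProj X f g :=
  congrFun (congrFun (permConj_permProj π X) f) g

lemma card_perm_fin : Fintype.card (Equiv.Perm (Fin n)) = n.factorial := by
  simp [Fintype.card_perm]

lemma permProj_idem (X : QMat n) : permProj (permProj X) = permProj X := by
  ext f g
  show (n.factorial:ℂ)⁻¹ * ∑ π : Equiv.Perm (Fin n), (permProj X) (f ∘ π) (g ∘ π) = _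
  rw [Finset.sum_congr rfl fun π _ => permProj_apply_comp π X f g, Finset.sum_const,
    Finset.card_univ, card_perm_fin, nsmul_eq_mul, ← mul_assoc,
    inv_mul_cancel₀ (Nat.cast_ne_zero.mpr (Nat.factorial_ne_zero n)), one_mul]

lemma norm_permProj_le (X : QMat n) : ‖permProj X‖ ≤ ‖X‖ := by
  rw [permProj_eq_avg]
  rw [norm_smul]
  calc ‖(n.factorial:ℝ)⁻¹‖ * ‖∑ π : Equiv.Perm (Fin n), permConj π X‖
      ≤ (n.factorial:ℝ)⁻¹ * ∑ π : Equiv.Perm (Fin n), ‖permConj π X‖ := by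
        gcongr
        · simp
        · exact norm_sum_le _ _
    _ = (n.factorial:ℝ)⁻¹ * ∑ π : Equiv.Perm (Fin n), ‖X‖ := by
        rw [Finset.sum_congr rfl fun π _ => norm_permConj π X]
    _ = ‖X‖ := by
        rw [Finset.sum_const, Finset.card_univ, card_perm_fin, nsmul_eq_mul, ← mul_assoc,
          inv_mul_cancel₀ (Nat.cast_ne_zero.mpr (by exact_mod_cast Nat.factorial_ne_zero n)), one_mul]

lemma permProj_of_invariant {X : QMat n} (hX : ∀ π : Equiv.Perm (Fin n), permConj π X = X) :
    permProj X = X := by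
  ext f g
  show (n.factorial:ℂ)⁻¹ * ∑ π : Equiv.Perm (Fin n), X (f ∘ π) (g ∘ π) = _
  have : ∀ π : Equiv.Perm (Fin n), X (f ∘ π) (g ∘ π) = X f g := fun π =>
    congrFun (congrFun (hX π) f) g
  rw [Finset.sum_congr rfl fun π _ => this π, Finset.sum_const, Finset.card_univ,
    card_perm_fin, nsmul_eq_mul,
    ← mul_assoc, inv_mul_cancel₀ (Nat.cast_ne_zero.mpr (Nat.factorial_ne_zero n)), one_mul]
lemma permProj_add (X Y : QMat n) : permProj (X + Y) = permProj X + permProj Y := by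
  ext f g
  simp [permProj, Matrix.add_apply, Finset.sum_add_distrib, mul_add]

lemma permProj_zero : permProj (0 : QMat n) = 0 := by
  ext f g
  simp [permProj]

lemma permProj_smulR (r : ℝ) (X : QMat n) : permProj (r • X) = r • permProj X := by
  ext f g
  simp [permProj, Matrix.smul_apply, Complex.real_smul, Finset.mul_sum]
  exact Finset.sum_congr rfl fun _ _ => by ring

lemma permProj_sum {κ : Type} [Fintype κ] (y : κ → QMat n) :
    permProj (∑ i, y i) = ∑ i, permProj (y i) := by
  classical
  induction (Finset.univ : Finset κ) using Finset.induction with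
  | empty => simp [permProj_zero]
  | @insert _ _ h ih => rw [Finset.sum_insert h, permProj_add, ih, Finset.sum_insert h]

lemma permProj_sub (X Y : QMat n) : permProj (X - Y) = permProj X - permProj Y := by
  have h := permProj_add (X - Y) Y
  rw [sub_add_cancel] at h
  rw [h]; abel

lemma swapConj_add (j k : Fin n) (X Y : QMat n) :
    swapConj j k (X + Y) = swapConj j k X + swapConj j k Y := by
  ext f g; simp [swapConj, Matrix.add_apply]

lemma swapConj_smulR (j k : Fin n) (r : ℝ) (X : QMat n) :
    swapConj j k (r • X) = r • swapConj j k X := by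
  ext f g; simp [swapConj, Matrix.smul_apply]

lemma coupling_add (a : Fin n → Fin n → ℝ) (X Y : QMat n) :
    coupling a (X + Y) = coupling a X + coupling a Y := by
  unfold coupling
  rw [← Finset.sum_add_distrib]
  refine Finset.sum_congr rfl fun j _ => ?_
  rw [← Finset.sum_add_distrib]
  refine Finset.sum_congr rfl fun k _ => ?_
  split
  · rw [swapConj_add]
    rw [← smul_add]
    congr 1
    abel
  · simp

lemma coupling_smulR (a : Fin n → Fin n → ℝ) (r : ℝ) (X : QMat n) :
    coupling a (r • X) = r • coupling a X := by
  unfold coupling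
  rw [Finset.smul_sum]
  refine Finset.sum_congr rfl fun j _ => ?_
  rw [Finset.smul_sum]
  refine Finset.sum_congr rfl fun k _ => ?_
  split
  · rw [swapConj_smulR, ← smul_sub, smul_comm]
  · simp

lemma coupling_zero (a : Fin n → Fin n → ℝ) : coupling a (0 : QMat n) = 0 := by
  have := coupling_smulR a 0 0
  simpa using this

lemma coupling_sub (a : Fin n → Fin n → ℝ) (X Y : QMat n) :
    coupling a (X - Y) = coupling a X - coupling a Y := by
  have h := coupling_add a (X - Y) Y
  rw [sub_add_cancel] at h
  rw [h]; abel

lemma permProj_coupling (a : Fin n → Fin n → ℝ) (X : QMat n) :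
    permProj (coupling a X) = 0 := by
  unfold coupling
  rw [permProj_sum]
  refine Finset.sum_eq_zero fun j _ => ?_
  rw [permProj_sum]
  refine Finset.sum_eq_zero fun k _ => ?_
  split
  · rw [permProj_smulR, permProj_sub, swapConj_eq_permConj, permProj_permConj]
    simp
  · exact permProj_zero

lemma coupling_permProj (a : Fin n → Fin n → ℝ) (X : QMat n) :
    coupling a (permProj X) = 0 := by
  unfold coupling
  refine Finset.sum_eq_zero fun j _ => Finset.sum_eq_zero fun k _ => ?_
  split
  · rw [swapConj_eq_permConj, permConj_permProj]
    simp
  · rfl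

lemma Fip_coupling_eq (a : Fin n → Fin n → ℝ) (x : QMat n) :
    Fip x (coupling a x)
      = -(1/2) * ∑ j, ∑ k, (if j < k then a j k * ‖swapConj j k x - x‖ ^ 2 else 0) := by
  unfold coupling
  rw [Fip_sum_right, Finset.mul_sum]
  refine Finset.sum_congr rfl fun j _ => ?_
  rw [Fip_sum_right, Finset.mul_sum]
  refine Finset.sum_congr rfl fun k _ => ?_
  split
  · rw [Fip_smul_right, Fip_sub_right, Fip_self]
    have h := norm_sub_sq_Fip (swapConj j k x) x
    rw [swapConj_eq_permConj, norm_permConj, ← swapConj_eq_permConj, Fip_comm] at h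
    linear_combination (a j k / 2) * h
  · simp [Fip_zero_right]
/-- linear-map versions for continuity -/
def permProjL : QMat n →ₗ[ℝ] QMat n where
  toFun := permProj
  map_add' := permProj_add
  map_smul' := permProj_smulR

def couplingL (a : Fin n → Fin n → ℝ) : QMat n →ₗ[ℝ] QMat n where
  toFun := coupling a
  map_add' := coupling_add a
  map_smul' := coupling_smulR a

def evalL (f g : Fin n → Fin 2) : QMat n →ₗ[ℝ] ℂ where
  toFun := fun X => X f g
  map_add' := fun _ _ => rfl
  map_smul' := fun _ _ => rfl

lemma permProj_continuous : Continuous (permProj : QMat n → QMat n) :=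
  (permProjL (n := n)).continuous_of_finiteDimensional

lemma coupling_continuous (a : Fin n → Fin n → ℝ) : Continuous (coupling a : QMat n → QMat n) :=
  (couplingL a).continuous_of_finiteDimensional

lemma eval_continuous (f g : Fin n → Fin 2) : Continuous (fun X : QMat n => X f g) :=
  (evalL f g).continuous_of_finiteDimensional

lemma Fip_coupling_continuous (a : Fin n → Fin n → ℝ) :
    Continuous (fun x : QMat n => Fip x (coupling a x)) := by
  unfold Fip
  refine continuous_finset_sum _ fun f _ => continuous_finset_sum _ fun g _ => ?_
  exact Complex.continuous_re.comp
    (((Complex.continuous_conj).comp (eval_continuous f g)).mul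
      ((eval_continuous f g).comp (coupling_continuous a)))

/-- the invariance subgroup of a matrix -/
def invGroup (x : QMat n) : Subgroup (Equiv.Perm (Fin n)) where
  carrier := {π | permConj π x = x}
  one_mem' := permConj_one x
  mul_mem' := by
    intro σ π hσ hπ
    show permConj (σ * π) x = x
    rw [permConj_mul, hπ, hσ]
  inv_mem' := by
    intro π hπ
    show permConj π⁻¹ x = x
    have h : permConj (π⁻¹ * π) x = x := by rw [inv_mul_cancel]; exact permConj_one x
    rw [permConj_mul, hπ] at h
    exact h

lemma invariant_of_edge_invariant
    (a : Fin n → Fin n → ℝ) (ha_symm : ∀ j k, a j k = a k j)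
    (ha_conn : (SimpleGraph.fromRel fun j k => 0 < a j k).Connected)
    (x : QMat n)
    (hedge : ∀ j k : Fin n, j < k → 0 < a j k → permConj (Equiv.swap j k) x = x) :
    ∀ π : Equiv.Perm (Fin n), permConj π x = x := by
  set G := SimpleGraph.fromRel fun j k => 0 < a j k with hG
  have hadj : ∀ j k : Fin n, G.Adj j k → Equiv.swap j k ∈ invGroup x := by
    intro j k hjk
    rw [hG, SimpleGraph.fromRel_adj] at hjk
    obtain ⟨hne, h | h⟩ := hjk
    · rcases lt_or_gt_of_ne hne with hlt | hgt
      · exact hedge j k hlt h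
      · show permConj (Equiv.swap j k) x = x
        rw [Equiv.swap_comm]
        exact hedge k j hgt (by rw [ha_symm]; exact h)
    · rcases lt_or_gt_of_ne hne with hlt | hgt
      · exact hedge j k hlt (by rw [ha_symm]; exact h)
      · show permConj (Equiv.swap j k) x = x
        rw [Equiv.swap_comm]
        exact hedge k j hgt h
  have hwalk : ∀ (j k : Fin n), G.Walk j k → Equiv.swap j k ∈ invGroup x := by
    intro j k w
    induction w with
    | nil =>
      rw [Equiv.swap_self]
      exact (invGroup x).one_mem
    | @cons j m k h p ih =>
      by_cases hjk : j = k
      · subst hjk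
        rw [Equiv.swap_self]
        exact (invGroup x).one_mem
      · by_cases hmk : m = k
        · subst hmk
          exact hadj j m h
        · have hjm : j ≠ m := h.ne
          have key := Equiv.swap_mul_swap_mul_swap (x := k) (y := m) (z := j)
            (Ne.symm hmk) (Ne.symm hjk)
          -- key : swap m j * swap k m * swap m j = swap j k
          have h1 : Equiv.swap m j ∈ invGroup x := by
            rw [Equiv.swap_comm]; exact hadj j m h
          have h2 : Equiv.swap k m ∈ invGroup x := by
            rw [Equiv.swap_comm]; exact ih
          rw [← key]
          exact mul_mem (mul_mem h1 h2) h1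
  have hswap : ∀ σ : Equiv.Perm (Fin n), σ.IsSwap → σ ∈ invGroup x := by
    rintro σ ⟨j, k, hjk, rfl⟩
    exact (ha_conn.preconnected j k).elim (fun w => hwalk j k w)
  have htop : (⊤ : Subgroup (Equiv.Perm (Fin n))) ≤ invGroup x := by
    rw [← Equiv.Perm.closure_isSwap]
    exact (Subgroup.closure_le _).mpr hswap
  intro π
  exact htop (Subgroup.mem_top π)
lemma exists_unit_ker (hn : 2 ≤ n) :
    ∃ u : QMat n, permProj u = 0 ∧ ‖u‖ = 1 := by
  classical
  have h0 : 0 < n := by omega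
  have h1 : 1 < n := by omega
  set i0 : Fin n := ⟨0, h0⟩
  set i1 : Fin n := ⟨1, h1⟩
  have hne01 : i0 ≠ i1 := by simp [i0, i1, Fin.ext_iff]
  set σ : Equiv.Perm (Fin n) := Equiv.swap i0 i1 with hσ
  set f0 : Fin n → Fin 2 := fun i => if i = i0 then 1 else 0 with hf0
  set f1 : Fin n → Fin 2 := f0 ∘ σ with hf1
  have hf01 : f0 ≠ f1 := by
    intro h
    have := congrFun h i0
    simp [hf0, hf1, hσ, Equiv.swap_apply_left, hne01, Ne.symm hne01] at this
  set x0 : QMat n := Matrix.of fun f g =>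
    (if f = f0 ∧ g = f0 then (1:ℂ) else 0) - (if f = f1 ∧ g = f1 then 1 else 0) with hx0
  have hcompiff : ∀ h : Fin n → Fin 2, (h ∘ σ = f0) ↔ h = f1 := by
    intro h
    constructor
    · intro hh
      funext i
      have := congrFun hh (σ i)
      simpa [hσ, Function.comp, Equiv.swap_apply_self, hf1] using this
    · intro hh
      subst hh
      funext i
      simp [hf1, Function.comp, hσ, Equiv.swap_apply_self]
  have hP : permProj x0 = 0 := by
    ext f g
    show (n.factorial : ℂ)⁻¹ * ∑ π : Equiv.Perm (Fin n), x0 (f ∘ π) (g ∘ π) = 0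
    have hsplit : ∑ π : Equiv.Perm (Fin n), x0 (f ∘ π) (g ∘ π)
        = (∑ π : Equiv.Perm (Fin n), if f ∘ π = f0 ∧ g ∘ π = f0 then (1:ℂ) else 0)
          - ∑ π : Equiv.Perm (Fin n), if f ∘ π = f1 ∧ g ∘ π = f1 then (1:ℂ) else 0 := by
      rw [← Finset.sum_sub_distrib]
      rfl
    have hswap : (∑ π : Equiv.Perm (Fin n), if f ∘ π = f1 ∧ g ∘ π = f1 then (1:ℂ) else 0)
        = ∑ π : Equiv.Perm (Fin n), if f ∘ π = f0 ∧ g ∘ π = f0 then (1:ℂ) else 0 := by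
      refine Fintype.sum_equiv (Equiv.mulRight σ) _ _ fun π => ?_
      have hc1 : f ∘ ⇑(π * σ) = (f ∘ ⇑π) ∘ ⇑σ := rfl
      have hc2 : g ∘ ⇑(π * σ) = (g ∘ ⇑π) ∘ ⇑σ := rfl
      simp only [Equiv.coe_mulRight, hc1, hc2, hcompiff]
    rw [hsplit, hswap, sub_self, mul_zero]
  have hFip : Fip x0 x0 = 2 := by
    have hterm : ∀ f g, ((starRingEnd ℂ) (x0 f g) * x0 f g).re
        = (if f = f0 ∧ g = f0 then (1:ℝ) else 0) + (if f = f1 ∧ g = f1 then 1 else 0) := by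
      intro f g
      by_cases h1 : f = f0 ∧ g = f0 <;> by_cases h2 : f = f1 ∧ g = f1
      · exact absurd (h1.1.symm.trans h2.1) hf01
      · norm_num [hx0, Matrix.of_apply, h1, h2, hf01, hf01.symm]
      · norm_num [hx0, Matrix.of_apply, h1, h2, hf01, hf01.symm]
      · norm_num [hx0, Matrix.of_apply, h1, h2, hf01, hf01.symm]
    unfold Fip
    rw [Finset.sum_congr rfl fun f _ => Finset.sum_congr rfl fun g _ => hterm f g]
    have hone : ∀ p : Fin n → Fin 2,
        (∑ f, ∑ g, if f = p ∧ g = p then (1:ℝ) else 0) = 1 := by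
      intro p
      simp [ite_and, Finset.sum_ite_eq]
    simp only [Finset.sum_add_distrib]
    rw [hone f0, hone f1]
    norm_num
  have hnorm : ‖x0‖ = Real.sqrt 2 := by
    rw [← Real.sqrt_sq (norm_nonneg x0), ← Fip_self, hFip]
  refine ⟨(Real.sqrt 2)⁻¹ • x0, ?_, ?_⟩
  · rw [permProj_smulR, hP, smul_zero]
  · rw [norm_smul, hnorm, Real.norm_eq_abs, abs_of_pos (by positivity)]
    rw [inv_mul_cancel₀ (by positivity)]

lemma exists_gap (hn : 2 ≤ n) (a : Fin n → Fin n → ℝ)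
    (ha_nonneg : ∀ j k, 0 ≤ a j k) (ha_symm : ∀ j k, a j k = a k j)
    (ha_conn : (SimpleGraph.fromRel fun j k => 0 < a j k).Connected) :
    ∃ lam > (0:ℝ), ∀ x : QMat n, permProj x = 0 →
      Fip x (coupling a x) ≤ -(lam * ‖x‖ ^ 2) := by
  classical
  set S : Set (QMat n) := {x | permProj x = 0 ∧ ‖x‖ = 1} with hS
  have hclosed : IsClosed S := by
    have h1 : IsClosed {x : QMat n | permProj x = 0} :=
      isClosed_eq permProj_continuous continuous_const
    have h2 : IsClosed {x : QMat n | ‖x‖ = 1} :=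
      isClosed_eq continuous_norm continuous_const
    exact h1.inter h2
  have hbdd : Bornology.IsBounded S := by
    refine (Metric.isBounded_closedBall (x := (0 : QMat n)) (r := 1)).subset ?_
    intro x hx
    rw [Metric.mem_closedBall, dist_zero_right, hx.2]
  have hcpt : IsCompact S := Metric.isCompact_of_isClosed_isBounded hclosed hbdd
  obtain ⟨u, hu1, hu2⟩ := exists_unit_ker hn
  have hne : S.Nonempty := ⟨u, hu1, hu2⟩
  have hφc : Continuous (fun x : QMat n => -Fip x (coupling a x)) :=
    (Fip_coupling_continuous a).neg
  obtain ⟨z, hzS, hz⟩ := hcpt.exists_isMinOn hne hφc.continuousOn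
  set lam : ℝ := -Fip z (coupling a z) with hlam
  -- each diagonal term of the coupling quadratic form is nonneg
  have hterm_nonneg : ∀ x : QMat n, ∀ j k : Fin n,
      (0:ℝ) ≤ (if j < k then a j k * ‖swapConj j k x - x‖ ^ 2 else 0) := by
    intro x j k
    split
    · exact mul_nonneg (ha_nonneg _ _) (sq_nonneg _)
    · exact le_refl 0
  have hφ_nonneg : ∀ x : QMat n, 0 ≤ -Fip x (coupling a x) := by
    intro x
    rw [Fip_coupling_eq]
    have : (0:ℝ) ≤ ∑ j, ∑ k, (if j < k then a j k * ‖swapConj j k x - x‖ ^ 2 else 0) :=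
      Finset.sum_nonneg fun j _ => Finset.sum_nonneg fun k _ => hterm_nonneg x j k
    nlinarith
  have hlam_pos : 0 < lam := by
    rcases lt_or_eq_of_le (hφ_nonneg z) with h | h
    · exact h
    · exfalso
      have hFz : Fip z (coupling a z) = 0 := by linarith [h]
      have hzero : ∑ j, ∑ k, (if j < k then a j k * ‖swapConj j k z - z‖ ^ 2 else 0) = 0 := by
        have heq := Fip_coupling_eq a z
        rw [hFz] at heq
        linarith [heq]
      have hterms : ∀ j k : Fin n, j < k → 0 < a j k → swapConj j k z = z := by
        intro j k hjk hajk
        have hall := (Finset.sum_eq_zero_iff_of_nonneg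
          (fun j _ => Finset.sum_nonneg fun k _ => hterm_nonneg z j k)).mp hzero j
          (Finset.mem_univ j)
        have hall2 := (Finset.sum_eq_zero_iff_of_nonneg
          (fun k _ => hterm_nonneg z j k)).mp hall k (Finset.mem_univ k)
        rw [if_pos hjk] at hall2
        have hn0 : ‖swapConj j k z - z‖ ^ 2 = 0 := by
          rcases mul_eq_zero.mp hall2 with h' | h'
          · exact absurd h' (ne_of_gt hajk)
          · exact h'
        have hnz : ‖swapConj j k z - z‖ = 0 := by
          nlinarith [norm_nonneg (swapConj j k z - z)]
        exact sub_eq_zero.mp (norm_eq_zero.mp hnz)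
      have hinv := invariant_of_edge_invariant a ha_symm ha_conn z
        (fun j k hjk hajk => by
          rw [← swapConj_eq_permConj]; exact hterms j k hjk hajk)
      have hPz := permProj_of_invariant hinv
      rw [hzS.1] at hPz
      have hz1 := hzS.2
      rw [← hPz] at hz1
      simp at hz1
  refine ⟨lam, hlam_pos, ?_⟩
  intro x hx
  by_cases hx0 : x = 0
  · subst hx0
    simp [coupling_zero, Fip_zero_right]
  · have hxn : ‖x‖ ≠ 0 := norm_ne_zero_iff.mpr hx0
    have hx2 : 0 < ‖x‖ := lt_of_le_of_ne (norm_nonneg x) (Ne.symm hxn)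
    set u : QMat n := ‖x‖⁻¹ • x with hu
    have hu1 : permProj u = 0 := by rw [hu, permProj_smulR, hx, smul_zero]
    have hu2 : ‖u‖ = 1 := by
      rw [hu, norm_smul, Real.norm_eq_abs, abs_of_pos (by positivity),
        inv_mul_cancel₀ hxn]
    have hmin : lam ≤ -Fip u (coupling a u) := hz ⟨hu1, hu2⟩
    have hscale : Fip u (coupling a u)
        = ‖x‖⁻¹ * (‖x‖⁻¹ * Fip x (coupling a x)) := by
      rw [hu, coupling_smulR, Fip_smul_right]
      congr 1
      rw [Fip_comm, Fip_smul_right, Fip_comm]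
    rw [hscale] at hmin
    have h3 := mul_le_mul_of_nonneg_left hmin (sq_nonneg ‖x‖)
    have h4 : ‖x‖^2 * -(‖x‖⁻¹ * (‖x‖⁻¹ * Fip x (coupling a x)))
        = -Fip x (coupling a x) := by
      field_simp
    rw [h4] at h3
    nlinarith [h3]
section driftlin
variable {ι : Type} [Fintype ι] (hbar : ℝ) (H : QMat n) (γ : ι → ℝ) (L : ι → QMat n)

lemma dissip_add (Lm X Y : QMat n) :
    dissip Lm (X + Y) = dissip Lm X + dissip Lm Y := by
  unfold dissip
  simp only [Matrix.mul_add, Matrix.add_mul, smul_add]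
  module

lemma dissip_smulR (Lm : QMat n) (r : ℝ) (X : QMat n) :
    dissip Lm (r • X) = r • dissip Lm X := by
  unfold dissip
  simp only [Matrix.mul_smul, Matrix.smul_mul, smul_add, smul_sub]
  module

lemma drift_add (X Y : QMat n) :
    drift hbar H γ L (X + Y) = drift hbar H γ L X + drift hbar H γ L Y := by
  unfold drift
  simp only [Matrix.mul_add, Matrix.add_mul, dissip_add, smul_add]
  rw [Finset.sum_add_distrib]
  module

lemma drift_smulR (r : ℝ) (X : QMat n) :
    drift hbar H γ L (r • X) = r • drift hbar H γ L X := by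
  unfold drift
  simp only [Matrix.mul_smul, Matrix.smul_mul, dissip_smulR, smul_sub, smul_add]
  simp only [smul_comm r, Finset.smul_sum]

def driftQL : QMat n →ₗ[ℝ] QMat n where
  toFun := fun X => drift hbar H γ L X - permProj (drift hbar H γ L X)
  map_add' := by
    intro X Y
    rw [drift_add, permProj_add]
    abel
  map_smul' := by
    intro r X
    rw [drift_smulR, permProj_smulR]
    simp [smul_sub]

end driftlin

/-- density matrices have Frobenius norm at most 1 -/
lemma norm_le_one_of_density {ρ : QMat n} (hpsd : ρ.PosSemidef) (htr : ρ.trace = 1) :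
    ‖ρ‖ ≤ 1 := by
  classical
  obtain ⟨B, hB⟩ : ∃ B : QMat n, ρ = Bᴴ * B := by
    open scoped MatrixOrder in
    refine ⟨CFC.sqrt ρ, ?_⟩
    have h1 := CFC.sqrt_mul_sqrt_self ρ hpsd.nonneg
    have h2 : (CFC.sqrt ρ)ᴴ = CFC.sqrt ρ := (CFC.sqrt_nonneg ρ).isSelfAdjoint
    rw [h2, h1]
  set v : (Fin n → Fin 2) → EuclideanSpace ℂ (Fin n → Fin 2) := fun f => WithLp.toLp 2 (fun i => B i f) with hv
  have hent : ∀ f g, ρ f g = inner ℂ (v f) (v g) := by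
    intro f g
    rw [hB]
    simp [Matrix.mul_apply, Matrix.conjTranspose_apply, hv, PiLp.inner_apply, dotProduct, mul_comm]
  have hdiag : ∀ f, ρ f f = (‖v f‖ : ℂ) ^ 2 := by
    intro f
    rw [hent f f, inner_self_eq_norm_sq_to_K]
    norm_num
  have htr' : ∑ f, ‖v f‖ ^ 2 = 1 := by
    have : (↑(∑ f, ‖v f‖ ^ 2) : ℂ) = 1 := by
      push_cast
      rw [← htr, Matrix.trace]
      exact (Finset.sum_congr rfl fun f _ => (hdiag f).symm)
    exact_mod_cast this
  have hsq : ‖ρ‖ ^ 2 ≤ 1 := by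
    rw [← Fip_self]
    have hbound : ∀ f g, ((starRingEnd ℂ) (ρ f g) * ρ f g).re ≤ ‖v f‖ ^ 2 * ‖v g‖ ^ 2 := by
      intro f g
      rw [← Complex.normSq_eq_conj_mul_self]
      have h1 : ‖ρ f g‖ ≤ ‖v f‖ * ‖v g‖ := by
        rw [hent f g]
        exact norm_inner_le_norm (𝕜 := ℂ) _ _
      have h2 : ((starRingEnd ℂ) (ρ f g) * ρ f g).re = ‖ρ f g‖ ^ 2 := by
        rw [← Complex.normSq_eq_conj_mul_self]
        simp [Complex.normSq_eq_norm_sq, ← Complex.ofReal_pow]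
      rw [← Complex.normSq_eq_conj_mul_self] at h2
      rw [h2]
      nlinarith [h1, norm_nonneg (ρ f g), norm_nonneg (v f), norm_nonneg (v g)]
    calc Fip ρ ρ ≤ ∑ f, ∑ g, ‖v f‖ ^ 2 * ‖v g‖ ^ 2 :=
        Finset.sum_le_sum fun f _ => Finset.sum_le_sum fun g _ => hbound f g
      _ = (∑ f, ‖v f‖ ^ 2) * (∑ g, ‖v g‖ ^ 2) := by
        rw [Finset.sum_mul_sum]
      _ = 1 := by rw [htr']; norm_num
  nlinarith [norm_nonneg ρ]

/-- exponential decay bound from a linear differential inequality -/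
lemma decay_bound (c b : ℝ) (hc : 0 < c) (hb : 0 ≤ b) (gf Gf : ℝ → ℝ)
    (hderiv : ∀ t ≥ (0:ℝ), HasDerivAt gf (Gf t) t)
    (hineq : ∀ t ≥ (0:ℝ), Gf t ≤ -c * gf t + b) :
    ∀ t ≥ (0:ℝ), gf t ≤ Real.exp (-(c*t)) * gf 0 + b / c := by
  intro t ht
  set h : ℝ → ℝ := fun s => Real.exp (c*s) * (gf s - b/c) with hh
  have hd : ∀ s ≥ (0:ℝ), HasDerivAt h (Real.exp (c*s) * (Gf s + c * gf s - b)) s := by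
    intro s hs
    have h1 : HasDerivAt (fun s : ℝ => Real.exp (c*s)) (c * Real.exp (c*s)) s := by
      simpa [mul_comm, Function.comp_def] using (Real.hasDerivAt_exp (c*s)).comp s
        ((hasDerivAt_id s).const_mul c)
    have h2 : HasDerivAt (fun s => gf s - b/c) (Gf s) s := (hderiv s hs).sub_const _
    have h3 := h1.mul h2
    have heq : Real.exp (c*s) * (Gf s + c * gf s - b)
        = c * Real.exp (c*s) * (gf s - b/c) + Real.exp (c*s) * Gf s := by
      field_simp
      ring
    rw [heq]
    exact h3
  have hanti : AntitoneOn h (Set.Icc 0 t) := by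
    apply antitoneOn_of_deriv_nonpos (convex_Icc 0 t)
    · exact fun s hs => ((hd s hs.1).continuousAt.continuousWithinAt)
    · intro s hs
      rw [interior_Icc] at hs
      exact (hd s hs.1.le).differentiableAt.differentiableWithinAt
    · intro s hs
      rw [interior_Icc] at hs
      rw [(hd s hs.1.le).deriv]
      have h5 := hineq s hs.1.le
      have h6 : Gf s + c * gf s - b ≤ 0 := by linarith
      nlinarith [Real.exp_pos (c*s)]
  have h0t : h t ≤ h 0 :=
    hanti (Set.left_mem_Icc.mpr ht) (Set.mem_Icc.mpr ⟨ht, le_refl t⟩) ht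
  have h0 : h 0 = gf 0 - b/c := by simp [hh]
  rw [h0] at h0t
  have hbc : 0 ≤ b / c := div_nonneg hb hc.le
  have hinv : Real.exp (-(c*t)) * Real.exp (c*t) = 1 := by
    rw [← Real.exp_add]; simp
  have h5 := mul_le_mul_of_nonneg_left h0t (Real.exp_pos (-(c*t))).le
  rw [hh] at h5
  simp only at h5
  rw [← mul_assoc, hinv, one_mul] at h5
  nlinarith [mul_nonneg (Real.exp_pos (-(c*t))).le hbc]
lemma hasDerivAt_Fip_self {x : ℝ → QMat n} {xd : QMat n} {s : ℝ}
    (hx : HasDerivAt x xd s) :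
    HasDerivAt (fun t => Fip (x t) (x t)) (2 * Fip (x s) xd) s := by
  have hent : ∀ f g, HasDerivAt (fun t => x t f g) (xd f g) s := fun f g =>
    ((evalL f g).toContinuousLinearMap.hasFDerivAt.comp_hasDerivAt s hx)
  have hterm : ∀ f g, HasDerivAt (fun t => ((starRingEnd ℂ) (x t f g) * (x t f g)).re)
      (2 * ((starRingEnd ℂ) (x s f g) * xd f g).re) s := by
    intro f g
    have hre : HasDerivAt (fun t => (x t f g).re) ((xd f g).re) s :=
      (Complex.reCLM.hasFDerivAt.comp_hasDerivAt s (hent f g))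
    have him : HasDerivAt (fun t => (x t f g).im) ((xd f g).im) s :=
      (Complex.imCLM.hasFDerivAt.comp_hasDerivAt s (hent f g))
    have h1 := (hre.mul hre).add (him.mul him)
    have hfun : (fun t => ((starRingEnd ℂ) (x t f g) * (x t f g)).re)
        = fun t => (x t f g).re * (x t f g).re + (x t f g).im * (x t f g).im := by
      funext t
      simp [Complex.mul_re, Complex.conj_re, Complex.conj_im]
      try ring
    rw [hfun]
    refine HasDerivAt.congr_deriv h1 ?_
    simp [Complex.mul_re, Complex.conj_re, Complex.conj_im]
    try ring
  have hsum : HasDerivAt (fun t => ∑ f, ∑ g, ((starRingEnd ℂ) (x t f g) * (x t f g)).re)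
      (∑ f, ∑ g, 2 * ((starRingEnd ℂ) (x s f g) * xd f g).re) s :=
    HasDerivAt.fun_sum fun f _ => HasDerivAt.fun_sum fun g _ => hterm f g
  have heq : (∑ f, ∑ g, 2 * ((starRingEnd ℂ) (x s f g) * xd f g).re)
      = 2 * Fip (x s) xd := by
    rw [Fip, Finset.mul_sum]
    exact Finset.sum_congr rfl fun f _ => by rw [Finset.mul_sum]
  rw [heq] at hsum
  exact hsum
instance qmatCLMSeminormed : SeminormedAddCommGroup (QMat n →L[ℝ] QMat n) := by
  exact @ContinuousLinearMap.toSeminormedAddCommGroup ℝ ℝ (QMat n) (QMat n) _ _ _ _ _ _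
    (RingHom.id ℝ) _

set_option maxHeartbeats 2000000 in
theorem stmt8 {n : ℕ} (hn : 2 ≤ n) {ι : Type} [Fintype ι] (hbar : ℝ) (hhbar : 0 < hbar)
    (H : QMat n) (hH : H.IsHermitian)
    (γ : ι → ℝ) (hγ : ∀ l, 0 < γ l) (L : ι → QMat n)
    -- symmetric nonnegative weights with zero diagonal and connected graph
    (a : Fin n → Fin n → ℝ) (ha_nonneg : ∀ j k, 0 ≤ a j k)
    (ha_symm : ∀ j k, a j k = a k j) (ha_diag : ∀ j, a j j = 0)
    (ha_conn : (SimpleGraph.fromRel fun j k => 0 < a j k).Connected) :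
    ∀ η > (0 : ℝ), ∀ T₁ > (0 : ℝ),
      ∃ Kstar > (0 : ℝ), ∀ K ≥ Kstar,
        ∀ ρ : ℝ → QMat n,
          (∀ t ≥ (0 : ℝ), (ρ t).PosSemidef ∧ (ρ t).trace = 1) →
          (∀ t ≥ (0 : ℝ), HasDerivAt ρ (drift hbar H γ L (ρ t) + K • coupling a (ρ t)) t) →
          ∀ t ≥ T₁, ‖ρ t - permProj (ρ t)‖ ≤ η := by
  classical
  intro η hη T₁ hT₁
  obtain ⟨lam, hlam, hgap⟩ := exists_gap hn a ha_nonneg ha_symm ha_conn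
  set TQ : QMat n →L[ℝ] QMat n := (driftQL hbar H γ L).toContinuousLinearMap with hTQdef
  have hTQ : ∀ y : QMat n, TQ y = drift hbar H γ L y - permProj (drift hbar H γ L y) :=
    fun _ => rfl
  set M : ℝ := ‖TQ‖ + 1 with hMdef
  have hM1 : 1 ≤ M := by
    have := norm_nonneg TQ
    rw [hMdef]; linarith
  have hMpos : 0 < M := by linarith
  clear_value TQ
  clear_value M
  refine ⟨max 1 (max (2*M/(lam*η)) (8/(lam*T₁*η^2))), lt_of_lt_of_le one_pos (le_max_left _ _), ?_⟩
  intro K hKge ρ hstate hderiv t ht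
  have hKpos : (0:ℝ) < K := lt_of_lt_of_le one_pos (le_trans (le_max_left _ _) hKge)
  set c : ℝ := K * lam with hc
  have hcpos : 0 < c := mul_pos hKpos hlam
  clear_value c
  set x : ℝ → QMat n := fun s => ρ s - permProj (ρ s) with hx
  set xd : ℝ → QMat n := fun s =>
    (drift hbar H γ L (ρ s) - permProj (drift hbar H γ L (ρ s))) + K • coupling a (x s)
    with hxd_def
  set PL : QMat n →L[ℝ] QMat n := (permProjL (n := n)).toContinuousLinearMap with hPLdef
  have hPL : ∀ y : QMat n, PL y = permProj y := fun _ => rfl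
  clear_value PL
  -- derivative of x
  have hxderiv : ∀ s ≥ (0:ℝ), HasDerivAt x (xd s) s := by
    intro s hs
    have h1 := PL.hasFDerivAt.comp_hasDerivAt s (hderiv s hs)
    simp only [Function.comp_def, hPL] at h1
    have h2 := (hderiv s hs).sub h1
    have h3 : (drift hbar H γ L (ρ s) + K • coupling a (ρ s))
        - permProj (drift hbar H γ L (ρ s) + K • coupling a (ρ s)) = xd s := by
      rw [permProj_add, permProj_smulR, permProj_coupling, smul_zero, add_zero, hxd_def]
      have hcx : coupling a (x s) = coupling a (ρ s) := by
        rw [hx]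
        rw [coupling_sub, coupling_permProj, sub_zero]
      dsimp only
      rw [hcx]
      abel
    erw [hPL] at h2
    rw [h3] at h2
    exact h2
  -- derivative of g
  have hgd : ∀ s ≥ (0:ℝ), HasDerivAt (fun u => Fip (x u) (x u)) (2 * Fip (x s) (xd s)) s :=
    fun s hs => hasDerivAt_Fip_self (hxderiv s hs)
  -- differential inequality
  have hineq : ∀ s ≥ (0:ℝ), 2 * Fip (x s) (xd s) ≤ -c * Fip (x s) (x s) + M^2/c := by
    intro s hs
    have hρ1 : ‖ρ s‖ ≤ 1 := norm_le_one_of_density (hstate s hs).1 (hstate s hs).2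
    have hPx : permProj (x s) = 0 := by
      rw [hx]
      show permProj (ρ s - permProj (ρ s)) = 0
      rw [permProj_sub, permProj_idem, sub_self]
    have hgapx := hgap (x s) hPx
    have hdb : Fip (x s) (drift hbar H γ L (ρ s) - permProj (drift hbar H γ L (ρ s)))
        ≤ ‖x s‖ * M := by
      calc Fip (x s) (drift hbar H γ L (ρ s) - permProj (drift hbar H γ L (ρ s)))
          = Fip (x s) (TQ (ρ s)) := by rw [hTQ]
        _ ≤ ‖x s‖ * ‖TQ (ρ s)‖ := Fip_le_norm _ _
        _ ≤ ‖x s‖ * (‖TQ‖ * ‖ρ s‖) :=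
            mul_le_mul_of_nonneg_left (TQ.le_opNorm _) (norm_nonneg _)
        _ ≤ ‖x s‖ * M := by
            have h1 : ‖TQ‖ * ‖ρ s‖ ≤ M := by
              have := norm_nonneg TQ
              nlinarith
            exact mul_le_mul_of_nonneg_left h1 (norm_nonneg _)
    have hsplit : Fip (x s) (xd s)
        = Fip (x s) (drift hbar H γ L (ρ s) - permProj (drift hbar H γ L (ρ s)))
          + K * Fip (x s) (coupling a (x s)) := by
      rw [hxd_def]
      show Fip (x s) (_ + K • coupling a (x s)) = _
      rw [Fip_add_right, Fip_smul_right]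
    have hgf : Fip (x s) (x s) = ‖x s‖^2 := Fip_self (x s)
    rw [hsplit, hgf]
    have hkey : 2 * (‖x s‖ * M) ≤ c * ‖x s‖^2 + M^2/c := by
      have h1 : 0 ≤ (c*‖x s‖ - M)^2 := sq_nonneg _
      rw [← mul_le_mul_iff_right₀ hcpos]
      have heq : c * (c * ‖x s‖^2 + M^2/c) = c^2*‖x s‖^2 + M^2 := by field_simp
      rw [heq]
      nlinarith
    have hcoup : K * Fip (x s) (coupling a (x s)) ≤ -c * ‖x s‖^2 := by
      have := mul_le_mul_of_nonneg_left hgapx hKpos.le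
      calc K * Fip (x s) (coupling a (x s)) ≤ K * -(lam * ‖x s‖^2) := this
        _ = -c * ‖x s‖^2 := by rw [hc]; ring
    nlinarith [hdb, hcoup, hkey]
  -- decay
  have hg0 : Fip (x 0) (x 0) ≤ 4 := by
    have hρ0 : ‖ρ 0‖ ≤ 1 := norm_le_one_of_density (hstate 0 le_rfl).1 (hstate 0 le_rfl).2
    have hx0 : ‖x 0‖ ≤ 2 := by
      calc ‖x 0‖ = ‖ρ 0 - permProj (ρ 0)‖ := rfl
        _ ≤ ‖ρ 0‖ + ‖permProj (ρ 0)‖ := norm_sub_le _ _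
        _ ≤ 1 + 1 := add_le_add hρ0 (le_trans (norm_permProj_le _) hρ0)
        _ = 2 := by norm_num
    rw [Fip_self]
    nlinarith [norm_nonneg (x 0)]
  have hdec := decay_bound c (M^2/c) hcpos (by positivity)
    (fun u => Fip (x u) (x u)) (fun s => 2 * Fip (x s) (xd s)) hgd hineq
  have ht0 : (0:ℝ) ≤ t := le_trans hT₁.le ht
  have hbound := hdec t ht0
  -- numeric estimates
  have hKa : 2*M/(lam*η) ≤ K :=
    le_trans (le_trans (le_max_left _ _) (le_max_right 1 _)) hKge
  have hKb : 8/(lam*T₁*η^2) ≤ K :=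
    le_trans (le_trans (le_max_right _ _) (le_max_right 1 _)) hKge
  have hc1 : 2*M/η ≤ c := by
    have h := mul_le_mul_of_nonneg_right hKa hlam.le
    have heq : (2*M/(lam*η)) * lam = 2*M/η := by field_simp
    rw [heq] at h
    rw [hc]; linarith
  have hc2 : 8/(T₁*η^2) ≤ c := by
    have h := mul_le_mul_of_nonneg_right hKb hlam.le
    have heq : (8/(lam*T₁*η^2)) * lam = 8/(T₁*η^2) := by field_simp
    rw [heq] at h
    rw [hc]; linarith
  have hctpos : 0 < c * T₁ := mul_pos hcpos hT₁
  have hexp : Real.exp (-(c*t)) ≤ 1/(c*T₁) := by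
    have h1 : Real.exp (-(c*t)) ≤ Real.exp (-(c*T₁)) := by
      have hmul := mul_le_mul_of_nonneg_left ht hcpos.le
      apply Real.exp_le_exp.mpr
      linarith
    have h2 : c*T₁ ≤ Real.exp (c*T₁) := by linarith [Real.add_one_le_exp (c*T₁)]
    have h3 : Real.exp (-(c*T₁)) = (Real.exp (c*T₁))⁻¹ := by rw [Real.exp_neg]
    have h4 : (Real.exp (c*T₁))⁻¹ ≤ (c*T₁)⁻¹ := by
      apply inv_anti₀ hctpos h2
    rw [h3] at h1
    rw [one_div]
    linarith
  have hg0nn : 0 ≤ Fip (x 0) (x 0) := by rw [Fip_self]; positivity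
  have hexp_pos : 0 < Real.exp (-(c*t)) := Real.exp_pos _
  have hterm1 : Real.exp (-(c*t)) * Fip (x 0) (x 0) ≤ 4/(c*T₁) := by
    calc Real.exp (-(c*t)) * Fip (x 0) (x 0) ≤ (1/(c*T₁)) * 4 := by
          apply mul_le_mul hexp hg0 hg0nn
          positivity
      _ = 4/(c*T₁) := by ring
  have hterm2 : (M^2/c)/c ≤ η^2/4 := by
    have hMc : M/c ≤ η/2 := by
      rw [div_le_div_iff₀ hcpos (by norm_num : (0:ℝ) < 2)]
      have := mul_le_mul_of_nonneg_right hc1 (le_of_lt hη)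
      have heq : (2*M/η) * η = 2*M := by field_simp
      rw [heq] at this
      nlinarith
    have h1 : (M^2/c)/c = (M/c)^2 := by field_simp
    rw [h1]
    nlinarith [div_nonneg hMpos.le hcpos.le]
  have hterm1' : 4/(c*T₁) ≤ η^2/2 := by
    have h1 : 8/η^2 ≤ c*T₁ := by
      have := mul_le_mul_of_nonneg_right hc2 hT₁.le
      have heq : (8/(T₁*η^2)) * T₁ = 8/η^2 := by field_simp
      rw [heq] at this
      linarith
    rw [div_le_div_iff₀ hctpos (by norm_num : (0:ℝ) < 2)]
    have h2 := mul_le_mul_of_nonneg_left h1 (sq_nonneg η)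
    have h3 : η^2*(8/η^2) = 8 := by field_simp
    linarith
  have hfinal : Fip (x t) (x t) ≤ η^2 := by
    have := hbound
    nlinarith [hterm1, hterm2, hterm1']
  have hxt : ‖x t‖^2 ≤ η^2 := by rw [← Fip_self]; exact hfinal
  have : ‖ρ t - permProj (ρ t)‖ = ‖x t‖ := rfl
  rw [this]
  nlinarith [norm_nonneg (x t)]
end
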